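/- For a non-crossing pair partition π of {1,…,k} (k even), lim_{n→∞} #S_n(π)/n^{k/2+1} = 1, where S_n(π) = {(p_1,…,p_k) ∈ {1,…,n}^k : p_i + p_{i+1} = p_j + p_{j+1} ⟺ i ∼_π j} (indices cyclic). -/

import Mathlib

open Finset Filter

/-- `i ∼_π j`: `i` and `j` lie in the same block of the partition `π`. -/
def sameBlock {k : ℕ} (P : Finpartition (Finset.univ : Finset (Fin k))) (i j : Fin k) : Prop :=
  ∃ b ∈ P.parts, i ∈ b ∧ j ∈ b

/-- `S_n(π)`: tuples `(p 1, …, p k) ∈ {1,…,n}^k` with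
`p i + p (i+1) = p j + p (j+1) ↔ i ∼_π j` (indices cyclic). -/
def consistentSet (k n : ℕ) [NeZero k] (P : Finpartition (Finset.univ : Finset (Fin k))) :
    Set (Fin k → ℕ) :=
  {p | (∀ i, 1 ≤ p i ∧ p i ≤ n) ∧
    ∀ i j : Fin k, p i + p (i + 1) = p j + p (j + 1) ↔ sameBlock P i j}

/-- `π` is a pair partition: every block has exactly two elements. -/
def isPairPartition {k : ℕ} (P : Finpartition (Finset.univ : Finset (Fin k))) : Prop :=
  ∀ b ∈ P.parts, b.card = 2

/-- `π` is crossing: there are `i < j < l < m` with `i ∼ l` and `j ∼ m`. -/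
def isCrossing {k : ℕ} (P : Finpartition (Finset.univ : Finset (Fin k))) : Prop :=
  ∃ i j l m : Fin k, i < j ∧ j < l ∧ l < m ∧ sameBlock P i l ∧ sameBlock P j m

/-- For a non-crossing pair partition `π` of `{1,…,k}`, `k = 2m > 0`,
`#S_n(π) / n^(k/2 + 1) → 1` as `n → ∞`. -/
lemma succ_val (K : ℕ) [NeZero K] (hK : 2 ≤ K) (x : Fin K) :
    (x + (1 : Fin K)).val = (x.val + 1) % K := by
  have h1 : (1 : Fin K).val = 1 % K := rfl
  rw [Fin.add_def, h1, Nat.one_mod_eq_one.mpr (by omega)]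

lemma succ_cases (K : ℕ) [NeZero K] (hK : 2 ≤ K) (x : Fin K) :
    (x.val + 1 < K ∧ (x + 1).val = x.val + 1) ∨ (x.val + 1 = K ∧ (x + 1).val = 0) := by
  have h := succ_val K hK x
  rcases Nat.lt_or_ge (x.val + 1) K with h2 | h2
  · left; refine ⟨h2, ?_⟩; rw [h, Nat.mod_eq_of_lt h2]
  · right
    have hx := x.isLt
    have : x.val + 1 = K := by omega
    refine ⟨this, ?_⟩; rw [h, this, Nat.mod_self]

def Noncross (k : ℕ) (σ : Fin k → Fin k) : Prop :=
  ¬ ∃ a b c d : Fin k, a < b ∧ b < c ∧ c < d ∧ σ a = c ∧ σ b = d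

def GoodMap (k r : ℕ) [NeZero k] (σ : Fin k → Fin k) (e : Fin k → Fin r) : Prop :=
  Function.Surjective e ∧
  (∀ i j : Fin k, (j = i ∨ j = σ i) ↔
    ((e i = e j ∧ e (i+1) = e (j+1)) ∨ (e i = e (j+1) ∧ e (i+1) = e j))) ∧
  (∀ p : Fin k → ℕ, (∀ i, p i + p (i+1) = p (σ i) + p (σ i + 1)) →
    ∀ i j, e i = e j → p i = p j)

lemma exists_adjacent {k : ℕ} (hk : 0 < k) (σ : Fin k → Fin k)
    (hinv : Function.Involutive σ) (hfix : ∀ i, σ i ≠ i) (hnc : Noncross k σ) :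
    ∃ a : Fin k, (σ a).val = a.val + 1 := by
  classical
  set Q : ℕ → Prop := fun d => 0 < d ∧ ∃ i j : Fin k, σ i = j ∧ j.val = i.val + d with hQ
  have hex : ∃ d, Q d := by
    have i0 : Fin k := ⟨0, hk⟩
    rcases lt_trichotomy (σ i0).val i0.val with h | h | h
    · exact ⟨i0.val - (σ i0).val, by omega, σ i0, i0, hinv i0, by omega⟩
    · exact absurd (Fin.ext h) (hfix i0)
    · exact ⟨(σ i0).val - i0.val, by omega, i0, σ i0, rfl, by omega⟩
  set d := Nat.find hex with hd
  obtain ⟨hdpos, i, j, hσi, hval⟩ := Nat.find_spec hex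
  by_cases hd1 : d = 1
  · exact ⟨i, by rw [hσi]; omega⟩
  exfalso
  have hd2 : 2 ≤ d := by omega
  have hij : i.val < j.val := by omega
  have hjk : j.val < k := j.isLt
  set b : Fin k := ⟨i.val + 1, by omega⟩ with hb
  set c := σ b with hc
  have hσj : σ j = i := by rw [← hσi]; exact hinv i
  have hσc : σ c = b := hinv b
  have hcb : c ≠ b := hfix b
  have hci : c ≠ i := by
    intro hh; rw [hh, hσi] at hσc
    have : j.val = i.val + 1 := congrArg Fin.val hσc
    omega
  have hcj : c ≠ j := by
    intro hh; rw [hh, hσj] at hσc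
    have : i.val = i.val + 1 := congrArg Fin.val hσc
    omega
  have hbi : b.val = i.val + 1 := rfl
  rcases lt_trichotomy c.val i.val with h | h | h
  · -- crossing (c, i, b, j)
    exact hnc ⟨c, i, b, j, by rw [Fin.lt_def]; omega, by rw [Fin.lt_def, hbi]; omega,
      by rw [Fin.lt_def, hbi]; omega, hσc, hσi⟩
  · exact hci (Fin.ext h)
  · rcases lt_trichotomy c.val j.val with h2 | h2 | h2
    · -- c in (i, j): smaller gap pair (b, c)
      have hcbv : b.val < c.val := by
        have := hcb
        rcases Nat.lt_or_ge b.val c.val with hh | hh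
        · exact hh
        · exfalso
          have : c.val ≠ b.val := fun he => hcb (Fin.ext he)
          omega
      have : Q (c.val - b.val) := ⟨by omega, b, c, rfl, by omega⟩
      have := Nat.find_min hex (m := c.val - b.val) (by omega) this
      exact this
    · exact hcj (Fin.ext h2)
    · -- crossing (i, b, j, c)
      exact hnc ⟨i, b, j, c, by rw [Fin.lt_def, hbi]; omega, by rw [Fin.lt_def, hbi]; omega,
        by rw [Fin.lt_def]; omega, hσi, rfl⟩

lemma core (m : ℕ) (hm : 1 ≤ m) :
    ∀ σ : Fin (2*m) → Fin (2*m), Function.Involutive σ → (∀ i, σ i ≠ i) →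
      Noncross (2*m) σ →
      haveI : NeZero (2*m) := ⟨by omega⟩
      ∃ e : Fin (2*m) → Fin (m+1), GoodMap (2*m) (m+1) σ e := by
  induction m, hm using Nat.le_induction with
  | base =>
    intro σ hinv hfix hnc
    haveI : NeZero (2*1) := ⟨by omega⟩
    have hσ : ∀ i : Fin (2*1), (σ i).val = (i.val + 1) % 2 := by
      intro i
      have h1 := (σ i).isLt
      have h2 := i.isLt
      have h3 : σ i ≠ i := hfix i
      have h4 : (σ i).val ≠ i.val := fun h => h3 (Fin.ext h)
      omega
    have hs : ∀ x : Fin (2*1), (x + 1).val = (x.val + 1) % 2 := by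
      intro x; exact succ_val (2*1) (by omega) x
    refine ⟨fun i => ⟨i.val, by have := i.isLt; omega⟩, ?_, ?_, ?_⟩
    · intro y; exact ⟨⟨y.val, by have := y.isLt; omega⟩, by apply Fin.ext; simp⟩
    · intro i j
      have hi := i.isLt; have hj := j.isLt
      constructor
      · intro _
        simp only [Fin.mk.injEq]
        by_cases hij : i.val = j.val
        · left; exact ⟨hij, by rw [hs, hs, hij]⟩
        · right
          constructor
          · rw [hs]; omega
          · rw [hs]; omega
      · intro _
        by_cases hij : i.val = j.val
        · left; exact (Fin.ext hij).symm
        · right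
          apply Fin.ext
          rw [hσ]; omega
    · intro p hp i j hij
      have hv : i.val = j.val := by
        have := congrArg Fin.val hij
        simpa using this
      rw [Fin.ext hv]
  | succ m hm ih =>
    intro σ hinv hfix hnc
    haveI hNZ : NeZero (2*(m+1)) := ⟨by omega⟩
    haveI hNZ2 : NeZero (2*m) := ⟨by omega⟩
    have hsk : ∀ x : Fin (2*(m+1)), (x.val + 1 < 2*(m+1) ∧ (x + 1).val = x.val + 1) ∨
        (x.val + 1 = 2*(m+1) ∧ (x + 1).val = 0) := fun x => succ_cases _ (by omega) x
    have hsm : ∀ x : Fin (2*m), (x.val + 1 < 2*m ∧ (x + 1).val = x.val + 1) ∨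
        (x.val + 1 = 2*m ∧ (x + 1).val = 0) := fun x => succ_cases _ (by omega) x
    obtain ⟨a, ha⟩ := exists_adjacent (by omega) σ hinv hfix hnc
    set α := a.val with hα
    have hαlt : α + 1 < 2*(m+1) := ha ▸ (σ a).isLt
    set a1 := σ a with ha1
    have ha1v : a1.val = α + 1 := ha
    have hσa1 : σ a1 = a := hinv a
    have haa1 : a ≠ a1 := fun h => by rw [← h] at ha1v; omega
    have ha1a : a + 1 = a1 := by
      apply Fin.ext
      rcases hsk a with ⟨h1, h2⟩ | ⟨h1, h2⟩
      · rw [h2, ha1v]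
      · exfalso; omega
    set ι : Fin (2*m) → Fin (2*(m+1)) :=
      fun t => if t.val < α then ⟨t.val, by omega⟩ else ⟨t.val + 2, by omega⟩ with hιdef
    have hιv : ∀ t, (ι t).val = if t.val < α then t.val else t.val + 2 := by
      intro t; rw [hιdef]; dsimp only; split_ifs <;> rfl
    set ρ : Fin (2*(m+1)) → Fin (2*m) :=
      fun j => if h : j.val < α then ⟨j.val, by omega⟩ else ⟨j.val - 2, by omega⟩ with hρdef
    have hρv : ∀ j, (ρ j).val = if j.val < α then j.val else j.val - 2 := by
      intro j; rw [hρdef]; dsimp only; split_ifs <;> rfl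
    have hρι : ∀ t, ρ (ι t) = t := by
      intro t
      have h1 := hιv t
      have h2 := hρv (ι t)
      have h3 := t.isLt
      apply Fin.ext
      split_ifs at h1 h2 <;> omega
    have hι_ne : ∀ t, (ι t).val ≠ α ∧ (ι t).val ≠ α + 1 := by
      intro t
      have h1 := hιv t
      split_ifs at h1 <;> omega
    have hιρ : ∀ j : Fin (2*(m+1)), j.val ≠ α → j.val ≠ α + 1 → ι (ρ j) = j := by
      intro j h1 h2
      have h3 := hρv j
      have h4 := hιv (ρ j)
      have h5 := j.isLt
      apply Fin.ext
      split_ifs at h3 h4 <;> omega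
    have hιinj : ∀ x y : Fin (2*m), ι x = ι y ↔ x = y := by
      intro x y
      constructor
      · intro h
        have := congrArg Fin.val h
        rw [hιv, hιv] at this
        apply Fin.ext
        split_ifs at this <;> omega
      · intro h; rw [h]
    have hσι_ne : ∀ t, (σ (ι t)).val ≠ α ∧ (σ (ι t)).val ≠ α + 1 := by
      intro t
      constructor
      · intro h
        have : σ (ι t) = a := Fin.ext h
        have : ι t = a1 := by rw [← hinv (ι t), this, ha1]
        have := congrArg Fin.val this
        exact absurd (this.trans ha1v) (hι_ne t).2
      · intro h
        have : σ (ι t) = a1 := Fin.ext (by rw [h, ha1v])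
        have : ι t = a := by rw [← hinv (ι t), this, hσa1]
        exact (hι_ne t).1 (congrArg Fin.val this)
    set σ' : Fin (2*m) → Fin (2*m) := fun t => ρ (σ (ι t)) with hσ'def
    have hcomm : ∀ t, ι (σ' t) = σ (ι t) := by
      intro t
      rw [hσ'def]
      exact hιρ _ (hσι_ne t).1 (hσι_ne t).2
    have hinv' : Function.Involutive σ' := by
      intro t
      rw [hσ'def]
      dsimp only
      rw [hcomm t, hinv (ι t), hρι]
    have hfix' : ∀ t, σ' t ≠ t := by
      intro t h
      have : σ (ι t) = ι t := by rw [← hcomm t, h]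
      exact hfix (ι t) this
    have hmono : ∀ x y : Fin (2*m), x < y → ι x < ι y := by
      intro x y h
      rw [Fin.lt_def] at h ⊢
      rw [hιv, hιv]
      split_ifs <;> omega
    have hnc' : Noncross (2*m) σ' := by
      rintro ⟨p, q, r, s, h1, h2, h3, h4, h5⟩
      exact hnc ⟨ι p, ι q, ι r, ι s, hmono _ _ h1, hmono _ _ h2, hmono _ _ h3,
        by rw [← hcomm p, h4], by rw [← hcomm q, h5]⟩
    obtain ⟨e', he'surj, he'iff, he'fac⟩ := ih σ' hinv' hfix' hnc'
    -- a2 = a1 + 1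
    set a2 := a1 + 1 with ha2
    have ha2c : (α + 2 < 2*(m+1) ∧ a2.val = α + 2) ∨ (α + 2 = 2*(m+1) ∧ a2.val = 0) := by
      rcases hsk a1 with ⟨h1, h2⟩ | ⟨h1, h2⟩
      · left; exact ⟨by omega, by rw [ha2, h2]; omega⟩
      · right; exact ⟨by omega, by rw [ha2, h2]⟩
    have ha2ne : a2.val ≠ α ∧ a2.val ≠ α + 1 := by
      rcases ha2c with ⟨h1, h2⟩ | ⟨h1, h2⟩ <;> omega
    have hιρa2 : ι (ρ a2) = a2 := hιρ _ ha2ne.1 ha2ne.2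
    set e : Fin (2*(m+1)) → Fin (m+1+1) := fun j =>
      if j = a1 then Fin.last (m+1)
      else if j = a then (e' (ρ a2)).castSucc
      else (e' (ρ j)).castSucc with hedef
    have he_a1 : e a1 = Fin.last (m+1) := by rw [hedef]; simp
    have he_a : e a = (e' (ρ a2)).castSucc := by
      rw [hedef]; dsimp only; rw [if_neg haa1, if_pos rfl]
    have he_other : ∀ j, j.val ≠ α → j.val ≠ α + 1 → e j = (e' (ρ j)).castSucc := by
      intro j h1 h2
      rw [hedef]; dsimp only
      rw [if_neg (fun h => h2 (by rw [h, ha1v])), if_neg (fun h => h1 (by rw [h]))]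
    have he_ι : ∀ t, e (ι t) = (e' t).castSucc := by
      intro t
      rw [he_other _ (hι_ne t).1 (hι_ne t).2, hρι]
    have he_a2 : e a2 = (e' (ρ a2)).castSucc := he_other _ ha2ne.1 ha2ne.2
    have hcs_ne : ∀ c : Fin (m+1), c.castSucc ≠ Fin.last (m+1) :=
      fun c => (Fin.castSucc_lt_last c).ne
    -- the W lemma
    have hW : ∀ t : Fin (2*m), ι (t+1) = ι t + 1 ∨ ((ι t + 1) = a ∧ ι (t+1) = a2) := by
      intro t
      have h1 := hιv t
      have h2 := hιv (t+1)
      have h3 := t.isLt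
      rcases hsm t with ⟨h4, h5⟩ | ⟨h4, h5⟩ <;>
        rcases hsk (ι t) with ⟨h6, h7⟩ | ⟨h6, h7⟩ <;>
        rcases ha2c with ⟨h8, h9⟩ | ⟨h8, h9⟩ <;>
        by_cases hca : (ι t + 1).val = α
      all_goals first
        | (right
           refine ⟨Fin.ext (by omega), Fin.ext ?_⟩
           split_ifs at h1 h2 <;> omega)
        | (left; apply Fin.ext; split_ifs at h1 h2 <;> omega)
    have hW1 : ∀ t : Fin (2*m), (ι t + 1) ≠ a1 := by
      intro t h
      have hv := congrArg Fin.val h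
      rw [ha1v] at hv
      rcases hsk (ι t) with ⟨h6, h7⟩ | ⟨h6, h7⟩
      · exact (hι_ne t).1 (by omega)
      · omega
    have heE : ∀ t : Fin (2*m), e (ι t + 1) = (e' (t+1)).castSucc := by
      intro t
      rcases hW t with h | ⟨h1, h2⟩
      · rw [← h, he_ι]
      · rw [h1, he_a]
        congr 1
        have : ρ a2 = t + 1 := by rw [← h2, hρι]
        rw [this]
    -- trichotomy
    have htri : ∀ j : Fin (2*(m+1)), j = a ∨ j = a1 ∨ ∃ t, j = ι t := by
      intro j
      by_cases h1 : j.val = α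
      · exact Or.inl (Fin.ext h1)
      by_cases h2 : j.val = α + 1
      · exact Or.inr (Or.inl (Fin.ext (by rw [h2, ha1v])))
      · exact Or.inr (Or.inr ⟨ρ j, (hιρ j h1 h2).symm⟩)
    have hane : ∀ t : Fin (2*m), a ≠ ι t := by
      intro t h
      exact (hι_ne t).1 (by rw [← h])
    have ha1ne : ∀ t : Fin (2*m), a1 ≠ ι t := by
      intro t h
      exact (hι_ne t).2 (by rw [← h, ha1v])
    refine ⟨e, ?_, ?_, ?_⟩
    · -- surjectivity
      intro y
      by_cases hy : y = Fin.last (m+1)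
      · exact ⟨a1, by rw [he_a1, hy]⟩
      · obtain ⟨c, hc⟩ := Fin.exists_castSucc_eq.mpr hy
        obtain ⟨t, ht⟩ := he'surj c
        exact ⟨ι t, by rw [he_ι, ht, hc]⟩
    · -- iff clause
      intro i j
      rcases htri i with rfl | rfl | ⟨t, rfl⟩ <;> rcases htri j with rfl | rfl | ⟨u, rfl⟩
      · exact iff_of_true (Or.inl rfl) (Or.inl ⟨rfl, rfl⟩)
      · -- (a, a1)
        refine iff_of_true (Or.inr ha1) (Or.inr ⟨?_, ?_⟩)
        · rw [he_a, ← ha2, he_a2]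
        · rw [ha1a, he_a1]
      · -- (a, ι u)
        refine iff_of_false ?_ ?_
        · rintro (h | h)
          · exact hane u h.symm
          · rw [← ha1] at h; exact ha1ne u h.symm
        · rintro (⟨h1, h2⟩ | ⟨h1, h2⟩)
          · rw [ha1a, he_a1, heE] at h2
            exact hcs_ne _ h2.symm
          · rw [ha1a, he_a1, he_ι] at h2
            exact hcs_ne _ h2.symm
      · -- (a1, a)
        refine iff_of_true (Or.inr hσa1.symm) (Or.inr ⟨?_, ?_⟩)
        · rw [he_a1, ha1a, he_a1]
        · rw [← ha2, he_a2, he_a]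
      · exact iff_of_true (Or.inl rfl) (Or.inl ⟨rfl, rfl⟩)
      · -- (a1, ι u)
        refine iff_of_false ?_ ?_
        · rintro (h | h)
          · exact ha1ne u h.symm
          · rw [hσa1] at h; exact hane u h.symm
        · rintro (⟨h1, h2⟩ | ⟨h1, h2⟩)
          · rw [he_a1, he_ι] at h1
            exact hcs_ne _ h1.symm
          · rw [he_a1, heE] at h1
            exact hcs_ne _ h1.symm
      · -- (ι t, a)
        refine iff_of_false ?_ ?_
        · rintro (h | h)
          · exact hane t h
          · have hh : a1 = ι t := by rw [ha1, h]; exact hinv (ι t)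
            exact ha1ne t hh
        · rintro (⟨h1, h2⟩ | ⟨h1, h2⟩)
          · rw [ha1a, he_a1, heE] at h2
            exact hcs_ne _ h2
          · rw [ha1a, he_a1, he_ι] at h1
            exact hcs_ne _ h1
      · -- (ι t, a1)
        refine iff_of_false ?_ ?_
        · rintro (h | h)
          · exact ha1ne t h
          · have hh : a = ι t := by rw [← hσa1, h]; exact hinv (ι t)
            exact hane t hh
        · rintro (⟨h1, h2⟩ | ⟨h1, h2⟩)
          · rw [he_ι, he_a1] at h1
            exact hcs_ne _ h1
          · rw [heE, he_a1] at h2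
            exact hcs_ne _ h2
      · -- (ι t, ι u)
        rw [he_ι t, he_ι u, heE t, heE u]
        have lhs : (ι u = ι t ∨ ι u = σ (ι t)) ↔ (u = t ∨ u = σ' t) := by
          rw [← hcomm t, hιinj, hιinj]
        rw [lhs, Fin.castSucc_inj, Fin.castSucc_inj, Fin.castSucc_inj, Fin.castSucc_inj]
        exact he'iff t u
    · -- factor clause
      intro p hp i j hij
      have hpa : p a = p a2 := by
        have h := hp a
        rw [← ha1, ha1a] at h
        rw [← ha2] at h
        omega
      have hWp : ∀ t : Fin (2*m), p (ι (t+1)) = p (ι t + 1) := by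
        intro t
        rcases hW t with h | ⟨h1, h2⟩
        · rw [h]
        · rw [h1, h2]; exact hpa.symm
      have hq : ∀ t : Fin (2*m), p (ι t) + p (ι (t+1)) = p (ι (σ' t)) + p (ι (σ' t + 1)) := by
        intro t
        rw [hWp t, hWp (σ' t), hcomm t]
        exact hp (ι t)
      have hfac' := he'fac (fun t => p (ι t)) hq
      have hlast : ∀ x : Fin (2*(m+1)), e x = Fin.last (m+1) → x = a1 := by
        intro x hx
        rcases htri x with rfl | rfl | ⟨t, rfl⟩
        · rw [he_a] at hx; exact absurd hx (hcs_ne _)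
        · rfl
        · rw [he_ι] at hx; exact absurd hx (hcs_ne _)
      rcases htri i with rfl | rfl | ⟨t, rfl⟩ <;> rcases htri j with rfl | rfl | ⟨u, rfl⟩
      · rfl
      · rw [he_a, he_a1] at hij; exact absurd hij (hcs_ne _)
      · -- (a, ι u)
        rw [he_a, he_ι] at hij
        have h1 : e' (ρ a2) = e' u := Fin.castSucc_injective _ hij
        have h2 := hfac' _ _ h1
        rw [hιρa2] at h2
        rw [hpa, h2]
      · rw [he_a1, he_a] at hij; exact absurd hij.symm (hcs_ne _)
      · rfl
      · rw [he_a1, he_ι] at hij; exact absurd hij.symm (hcs_ne _)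
      · -- (ι t, a)
        rw [he_ι, he_a] at hij
        have h1 : e' t = e' (ρ a2) := Fin.castSucc_injective _ hij
        have h2 := hfac' _ _ h1
        rw [hιρa2] at h2
        rw [h2, ← hpa]
      · rw [he_ι, he_a1] at hij; exact absurd hij (hcs_ne _)
      · -- (ι t, ι u)
        rw [he_ι, he_ι] at hij
        exact hfac' _ _ (Fin.castSucc_injective _ hij)

lemma exists_t {r : ℕ} (a b c d : Fin r) (h1 : ¬(a = c ∧ b = d)) (h2 : ¬(a = d ∧ b = c)) :
    ∃ t : Fin r, ((if a = t then 1 else 0) + (if b = t then 1 else 0) : ℕ) ≠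
      (if c = t then 1 else 0) + (if d = t then 1 else 0) := by
  by_cases hac : a = c
  · subst hac
    have hbd : b ≠ d := fun hh => h1 ⟨rfl, hh⟩
    exact ⟨b, by split_ifs <;> first | omega | simp_all⟩
  · by_cases had : a = d
    · subst had
      have hbc : b ≠ c := fun hh => h2 ⟨rfl, hh⟩
      exact ⟨b, by split_ifs <;> first | omega | simp_all⟩
    · exact ⟨a, by split_ifs <;> first | omega | simp_all⟩

lemma bad_card (n r : ℕ) (t a b c d : Fin r)
    (hc : ((if a = t then 1 else 0) + (if b = t then 1 else 0) : ℕ) ≠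
      (if c = t then 1 else 0) + (if d = t then 1 else 0)) :
    ((Fintype.piFinset fun _ : Fin r => Finset.Icc 1 n).filter
      (fun x => x a + x b = x c + x d)).card ≤ n ^ (r - 1) := by
  classical
  set target := Fintype.piFinset (fun s : Fin r => if s = t then ({1} : Finset ℕ) else Finset.Icc 1 n)
    with htarget
  have htc : target.card = n ^ (r - 1) := by
    rw [htarget, Fintype.card_piFinset,
      ← Finset.mul_prod_erase Finset.univ _ (Finset.mem_univ t)]
    rw [if_pos rfl]
    have : ∀ s ∈ Finset.univ.erase t,
        (if s = t then ({1} : Finset ℕ) else Finset.Icc 1 n).card = n := by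
      intro s hs
      rw [if_neg (Finset.ne_of_mem_erase hs), Nat.card_Icc]
      omega
    rw [Finset.prod_congr rfl this, Finset.prod_const, Finset.card_erase_of_mem (Finset.mem_univ t)]
    simp
  rw [← htc]
  apply Finset.card_le_card_of_injOn (fun x => Function.update x t 1)
  · intro x hx
    rw [Finset.mem_coe, Finset.mem_filter, Fintype.mem_piFinset] at hx
    rw [Finset.mem_coe, htarget, Fintype.mem_piFinset]
    intro s
    by_cases hs : s = t
    · subst hs; beta_reduce; rw [Function.update_self, if_pos rfl]; exact Finset.mem_singleton_self 1
    · beta_reduce; rw [Function.update_of_ne hs, if_neg hs]; exact hx.1 s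
  · intro x hx y hy heq
    simp only [Finset.mem_coe, Finset.mem_filter] at hx hy
    have hx2 := hx.2
    have hy2 := hy.2
    have hxy : ∀ s, s ≠ t → x s = y s := by
      intro s hs
      have h5 := congrFun heq s
      dsimp only at h5
      rwa [Function.update_of_ne hs, Function.update_of_ne hs] at h5
    have htt : x t = y t := by
      by_cases h1 : a = t <;> by_cases h2 : b = t <;> by_cases h3 : c = t <;> by_cases h4 : d = t
      all_goals (
        (first | (rw [h1] at hx2 hy2) | (rw [← hxy a h1] at hy2));
        (first | (rw [h2] at hx2 hy2) | (rw [← hxy b h2] at hy2));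
        (first | (rw [h3] at hx2 hy2) | (rw [← hxy c h3] at hy2));
        (first | (rw [h4] at hx2 hy2) | (rw [← hxy d h4] at hy2));
        simp only [h1, h2, h3, h4, eq_self_iff_true, if_true, if_false] at hc;
        omega)
    funext s
    by_cases hs : s = t
    · subst hs; exact htt
    · exact hxy s hs

lemma exists_involution {k : ℕ} (P : Finpartition (Finset.univ : Finset (Fin k)))
    (hpair : isPairPartition P) :
    ∃ σ : Fin k → Fin k, Function.Involutive σ ∧ (∀ i, σ i ≠ i) ∧
      (∀ i j, sameBlock P i j ↔ (j = i ∨ j = σ i)) := by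
  have h : ∀ i : Fin k, ∃ j, j ≠ i ∧ P.part i = {i, j} := by
    intro i
    have hmem : P.part i ∈ P.parts := P.part_mem.mpr (mem_univ i)
    have h2 : (P.part i).card = 2 := hpair _ hmem
    obtain ⟨x, y, hxy, hset⟩ := Finset.card_eq_two.mp h2
    have hi : i ∈ P.part i := P.mem_part (mem_univ i)
    rw [hset, mem_insert, mem_singleton] at hi
    rcases hi with rfl | rfl
    · exact ⟨y, fun hh => hxy hh.symm, hset⟩
    · exact ⟨x, fun hh => hxy hh, by rw [hset, Finset.pair_comm]⟩
  choose σ hne hpart using h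
  have hmem : ∀ i, P.part i ∈ P.parts := fun i => P.part_mem.mpr (mem_univ i)
  have hσmem : ∀ i, σ i ∈ P.part i := by
    intro i; rw [hpart i]; simp
  have hsame : ∀ i j, sameBlock P i j ↔ (j = i ∨ j = σ i) := by
    intro i j
    constructor
    · rintro ⟨b, hb, hib, hjb⟩
      have : b = P.part i := P.eq_of_mem_parts hb (hmem i) hib (P.mem_part (mem_univ i))
      subst this
      rw [hpart i, mem_insert, mem_singleton] at hjb
      exact hjb
    · rintro (rfl | rfl)
      · exact ⟨P.part j, hmem j, P.mem_part (mem_univ j), P.mem_part (mem_univ j)⟩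
      · exact ⟨P.part i, hmem i, P.mem_part (mem_univ i), hσmem i⟩
  refine ⟨σ, ?_, hne, hsame⟩
  intro i
  have h1 : P.part (σ i) = P.part i :=
    P.part_eq_of_mem (hmem i) (hσmem i)
  have h2 : σ (σ i) ∈ P.part i := by rw [← h1]; exact hσmem (σ i)
  rw [hpart i, mem_insert, mem_singleton] at h2
  rcases h2 with h2 | h2
  · exact h2
  · exact absurd h2 (hne (σ i))

/-- For a non-crossing pair partition `π` of `{1,…,k}`, `k = 2m > 0`,
`#S_n(π) / n^(k/2 + 1) → 1` as `n → ∞`. -/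
theorem stmt8 (m : ℕ) (hm : 0 < m) [NeZero (2 * m)]
    (P : Finpartition (Finset.univ : Finset (Fin (2 * m))))
    (hpair : isPairPartition P) (hnc : ¬ isCrossing P) :
    Tendsto (fun n : ℕ => ((consistentSet (2 * m) n P).ncard : ℝ) / (n : ℝ) ^ (m + 1))
      atTop (nhds 1) := by
  classical
  obtain ⟨σ, hinv, hfix, hsame⟩ := exists_involution P hpair
  have hncσ : Noncross (2*m) σ := by
    rintro ⟨a, b, c, d, h1, h2, h3, h4, h5⟩
    exact hnc ⟨a, b, c, d, h1, h2, h3,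
      (hsame a c).mpr (Or.inr h4.symm), (hsame b d).mpr (Or.inr h5.symm)⟩
  obtain ⟨e, hesurj, heiff, hefac⟩ := core m hm σ hinv hfix hncσ
  choose g hg using hesurj
  set Box : ℕ → Finset (Fin (m+1) → ℕ) :=
    fun n => Fintype.piFinset (fun _ => Finset.Icc 1 n) with hBox
  set Good : ℕ → Finset (Fin (m+1) → ℕ) := fun n =>
    (Box n).filter (fun x => ∀ i j : Fin (2*m), ¬ sameBlock P i j →
      x (e i) + x (e (i+1)) ≠ x (e j) + x (e (j+1))) with hGood
  have hBoxcard : ∀ n, (Box n).card = n ^ (m+1) := by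
    intro n
    rw [hBox]
    simp [Fintype.card_piFinset, Nat.card_Icc]
  have hset : ∀ n, consistentSet (2*m) n P = (fun x : Fin (m+1) → ℕ => x ∘ e) '' ↑(Good n) := by
    intro n
    ext p
    constructor
    · rintro ⟨hrange, hiff⟩
      have hp : ∀ i, p i + p (i+1) = p (σ i) + p (σ i + 1) := by
        intro i
        exact (hiff i (σ i)).mpr ((hsame i (σ i)).mpr (Or.inr rfl))
      have hxe : ∀ i, p (g (e i)) = p i := fun i => hefac p hp _ _ (hg (e i))
      refine ⟨fun t => p (g t), ?_, ?_⟩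
      · rw [hGood]
        dsimp only
        rw [Finset.mem_coe, Finset.mem_filter]
        refine ⟨?_, ?_⟩
        · rw [Fintype.mem_piFinset]
          intro t
          rw [Finset.mem_Icc]
          exact hrange (g t)
        · intro i j hnsb heq
          dsimp only at heq
          rw [hxe i, hxe (i+1), hxe j, hxe (j+1)] at heq
          exact hnsb ((hiff i j).mp heq)
      · funext i
        exact hxe i
    · rintro ⟨x, hx, rfl⟩
      rw [hGood] at hx
      dsimp only at hx
      rw [Finset.mem_coe, Finset.mem_filter, Fintype.mem_piFinset] at hx
      obtain ⟨hxB, hxG⟩ := hx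
      refine ⟨?_, ?_⟩
      · intro i
        have := hxB (e i)
        rwa [Finset.mem_Icc] at this
      · intro i j
        constructor
        · intro heq
          by_contra hnsb
          exact hxG i j hnsb heq
        · intro hsb
          rcases (heiff i j).mp ((hsame i j).mp hsb) with ⟨hA, hB⟩ | ⟨hA, hB⟩
          · show x (e i) + x (e (i+1)) = x (e j) + x (e (j+1))
            rw [hA, hB]
          · show x (e i) + x (e (i+1)) = x (e j) + x (e (j+1))
            rw [hA, hB, add_comm]
  have hinj : Function.Injective (fun x : Fin (m+1) → ℕ => x ∘ e) := by
    intro x y h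
    funext t
    have h2 := congrFun h (g t)
    simp only [Function.comp_apply] at h2
    rwa [hg t] at h2
  have hcard : ∀ n, (consistentSet (2*m) n P).ncard = (Good n).card := by
    intro n
    rw [hset n, Set.ncard_image_of_injective _ hinj, Set.ncard_coe_finset]
  have hub : ∀ n, (Good n).card ≤ n ^ (m+1) := by
    intro n
    rw [hGood]
    exact (Finset.card_filter_le _ _).trans (hBoxcard n).le
  have hbadpair : ∀ (i j : Fin (2*m)), ¬ sameBlock P i j → ∀ n,
      ((Box n).filter (fun x => x (e i) + x (e (i+1)) = x (e j) + x (e (j+1)))).card ≤ n ^ m := by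
    intro i j hnsb n
    have hnor : ¬(j = i ∨ j = σ i) := fun h => hnsb ((hsame i j).mpr h)
    have hD : ¬((e i = e j ∧ e (i+1) = e (j+1)) ∨ (e i = e (j+1) ∧ e (i+1) = e j)) :=
      fun h => hnor ((heiff i j).mpr h)
    obtain ⟨t, ht⟩ := exists_t (e i) (e (i+1)) (e j) (e (j+1))
      (fun h => hD (Or.inl h)) (fun h => hD (Or.inr h))
    have hbc := bad_card n (m+1) t (e i) (e (i+1)) (e j) (e (j+1)) ht
    rw [hBox]
    simpa using hbc
  have hlow : ∀ n : ℕ, n ^ (m+1) ≤ (Good n).card + (2*m) * (2*m) * n ^ m := by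
    intro n
    have hsplit := Finset.card_filter_add_card_filter_not (s := Box n)
      (p := fun x => ∀ i j : Fin (2*m), ¬ sameBlock P i j →
        x (e i) + x (e (i+1)) ≠ x (e j) + x (e (j+1)))
    have hbadsub : (Box n).filter (fun x => ¬ ∀ i j : Fin (2*m), ¬ sameBlock P i j →
        x (e i) + x (e (i+1)) ≠ x (e j) + x (e (j+1))) ⊆
        (Finset.univ : Finset (Fin (2*m) × Fin (2*m))).biUnion (fun q =>
          (Box n).filter (fun x => ¬ sameBlock P q.1 q.2 ∧
            x (e q.1) + x (e (q.1+1)) = x (e q.2) + x (e (q.2+1)))) := by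
      intro x hx
      rw [Finset.mem_filter] at hx
      obtain ⟨hxB, hxbad⟩ := hx
      push_neg at hxbad
      obtain ⟨i, j, hnsb, heq⟩ := hxbad
      rw [Finset.mem_biUnion]
      exact ⟨(i, j), Finset.mem_univ _, Finset.mem_filter.mpr ⟨hxB, hnsb, heq⟩⟩
    have hbadcard : ((Box n).filter (fun x => ¬ ∀ i j : Fin (2*m), ¬ sameBlock P i j →
        x (e i) + x (e (i+1)) ≠ x (e j) + x (e (j+1)))).card ≤ (2*m) * (2*m) * n ^ m := by
      refine (Finset.card_le_card hbadsub).trans ?_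
      refine (Finset.card_biUnion_le).trans ?_
      have hterm : ∀ q : Fin (2*m) × Fin (2*m),
          ((Box n).filter (fun x => ¬ sameBlock P q.1 q.2 ∧
            x (e q.1) + x (e (q.1+1)) = x (e q.2) + x (e (q.2+1)))).card ≤ n ^ m := by
        intro q
        by_cases hsb : sameBlock P q.1 q.2
        · have : (Box n).filter (fun x => ¬ sameBlock P q.1 q.2 ∧
              x (e q.1) + x (e (q.1+1)) = x (e q.2) + x (e (q.2+1))) = ∅ := by
            apply Finset.filter_false_of_mem
            intro x _ hx
            exact hx.1 hsb
          rw [this]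
          simp
        · refine (Finset.card_le_card ?_).trans (hbadpair q.1 q.2 hsb n)
          apply Finset.monotone_filter_right
          intro x _ hx
          exact hx.2
      refine (Finset.sum_le_sum (fun q _ => hterm q)).trans ?_
      rw [Finset.sum_const, Finset.card_univ, smul_eq_mul]
      simp [Fintype.card_prod]
    have h9 : (Good n).card + ((Box n).filter (fun x => ¬ ∀ i j : Fin (2*m), ¬ sameBlock P i j →
        x (e i) + x (e (i+1)) ≠ x (e j) + x (e (j+1)))).card = (Box n).card := by
      rw [hGood]
      exact hsplit
    rw [← hBoxcard n, ← h9]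
    exact Nat.add_le_add_left hbadcard _
  have hfuneq : (fun n : ℕ => ((consistentSet (2*m) n P).ncard : ℝ) / (n:ℝ)^(m+1)) =
      fun n : ℕ => ((Good n).card : ℝ) / (n:ℝ)^(m+1) := funext fun n => by rw [hcard n]
  rw [hfuneq]
  have hC : Tendsto (fun n : ℕ => 1 - ((2*m)*(2*m) : ℝ)/n) atTop (nhds 1) := by
    have h0 : Tendsto (fun n : ℕ => ((2*m)*(2*m) : ℝ)/n) atTop (nhds 0) :=
      tendsto_const_div_atTop_nhds_zero_nat _
    have h1 := (tendsto_const_nhds (x := (1:ℝ)) (f := (atTop : Filter ℕ))).sub h0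
    simpa using h1
  apply tendsto_of_tendsto_of_tendsto_of_le_of_le' hC tendsto_const_nhds
  · filter_upwards [eventually_ge_atTop 1] with n hn
    have hn0 : (0:ℝ) < (n:ℝ) := by exact_mod_cast hn
    have hpow : (0:ℝ) < (n:ℝ)^(m+1) := by positivity
    have hnum : ((n:ℝ)^(m+1) - (2*m)*(2*m)*(n:ℝ)^m) ≤ ((Good n).card : ℝ) := by
      have h2 := hlow n
      have h3 := (Nat.cast_le (α := ℝ)).mpr h2
      push_cast at h3
      linarith
    have heq1 : 1 - ((2*m)*(2*m):ℝ)/n = ((n:ℝ)^(m+1) - (2*m)*(2*m)*(n:ℝ)^m)/(n:ℝ)^(m+1) := by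
      field_simp
      ring
    rw [heq1]
    gcongr
  · filter_upwards [eventually_ge_atTop 1] with n hn
    have hn0 : (0:ℝ) < (n:ℝ) := by exact_mod_cast hn
    have hpow : (0:ℝ) < (n:ℝ)^(m+1) := by positivity
    rw [div_le_one hpow]
    have h2 := (Nat.cast_le (α := ℝ)).mpr (hub n)
    push_cast at h2
    exact h2
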